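/- Let G be a finite simple graph on vertex set [n] and let L_G be its bond lattice (the lattice of partitions of [n] induced by connected components of spanning subgraphs of G, ordered by refinement). Then the chromatic polynomial of G satisfies χ_G(t) = Σ_{p ∈ L_G} μ(0, p) · t^{n − r(p)}, where μ is the Möbius function of L_G and r(p) = n − |p| with |p| the number of blocks of the partition p. -/

import Mathlib

open scoped Classical

/-- The partition (as a setoid) of the vertex set induced by the connected
components of a graph `H`. -/
def componentSetoid {n : ℕ} (H : SimpleGraph (Fin n)) : Setoid (Fin n) :=
  H.reachableSetoid

/-- The bond lattice of a finite simple graph `G` on `[n]`: the poset of all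
partitions of the vertex set induced by connected components of spanning
subgraphs of `G`, ordered by refinement (the order induced from setoids);
its minimum is the partition into singletons. -/
def BondLattice {n : ℕ} (G : SimpleGraph (Fin n)) : Type :=
  {s : Setoid (Fin n) // ∃ H : SimpleGraph (Fin n), H ≤ G ∧ s = componentSetoid H}

instance {n : ℕ} (G : SimpleGraph (Fin n)) : PartialOrder (BondLattice G) :=
  Subtype.partialOrder _

noncomputable instance {n : ℕ} (G : SimpleGraph (Fin n)) : Fintype (BondLattice G) :=
  Fintype.ofSurjective
    (fun H : SimpleGraph (Fin n) =>
      if h : H ≤ G then (⟨componentSetoid H, H, h, rfl⟩ : BondLattice G)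
      else ⟨componentSetoid ⊥, ⊥, bot_le, rfl⟩)
    (by rintro ⟨s, H, hH, rfl⟩; exact ⟨H, by simp [hH]; rfl⟩)

/-- The number of blocks of a partition `p` in the bond lattice. -/
noncomputable def numBlocks {n : ℕ} {G : SimpleGraph (Fin n)} (p : BondLattice G) : ℕ :=
  Nat.card (Quotient p.val)

/-- Auxiliary: the "monochromatic subgraph" of `G` under a coloring `c`. -/
def monoGraph {n t : ℕ} (G : SimpleGraph (Fin n)) (c : Fin n → Fin t) :
    SimpleGraph (Fin n) where
  Adj i j := G.Adj i j ∧ c i = c j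
  symm := ⟨fun i j ⟨h, e⟩ => ⟨h.symm, e.symm⟩⟩
  loopless := ⟨fun i ⟨h, _⟩ => G.ne_of_adj h rfl⟩

def sigmaC {n t : ℕ} (G : SimpleGraph (Fin n)) (c : Fin n → Fin t) : BondLattice G :=
  ⟨componentSetoid (monoGraph G c), monoGraph G c, fun _ _ h => h.1, rfl⟩

lemma reachable_mono_eq {n t : ℕ} {G : SimpleGraph (Fin n)} {c : Fin n → Fin t}
    {i j : Fin n} (h : (monoGraph G c).Reachable i j) : c i = c j := by
  obtain ⟨w⟩ := h
  induction w with
  | nil => rfl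
  | cons h _ ih => exact h.2.trans ih

lemma le_sigmaC_iff {n t : ℕ} {G : SimpleGraph (Fin n)} (p : BondLattice G)
    (c : Fin n → Fin t) : p ≤ sigmaC G c ↔ ∀ i j, p.val i j → c i = c j := by
  constructor
  · intro h i j hij
    exact reachable_mono_eq (h hij)
  · intro h
    obtain ⟨s, H, hHG, hs⟩ := p
    subst hs
    intro i j hij
    refine SimpleGraph.Reachable.mono ?_ (hij : H.Reachable i j)
    intro a b hab
    exact ⟨hHG hab, h a b (hab.reachable : H.Reachable a b)⟩

lemma sigmaC_bot_iff {n t : ℕ} {G : SimpleGraph (Fin n)} (c : Fin n → Fin t) :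
    (sigmaC G c).val = ⊥ ↔ ∀ i j, G.Adj i j → c i ≠ c j := by
  constructor
  · intro h i j hadj hc
    have : (sigmaC G c).val i j := SimpleGraph.Adj.reachable (⟨hadj, hc⟩ : (monoGraph G c).Adj i j)
    rw [h] at this
    exact G.ne_of_adj hadj this
  · intro h
    apply le_bot_iff.mp
    intro i j hij
    have hr : (monoGraph G c).Reachable i j := hij
    obtain ⟨w⟩ := hr
    cases w with
    | nil => rfl
    | cons ha _ => exact absurd ha.2 (h _ _ ha.1)

lemma card_le_sigmaC {n t : ℕ} {G : SimpleGraph (Fin n)} (p : BondLattice G) :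
    Nat.card {c : Fin n → Fin t // p ≤ sigmaC G c} = t ^ numBlocks p := by
  have e : {c : Fin n → Fin t // p ≤ sigmaC G c} ≃ (Quotient p.val → Fin t) :=
    { toFun := fun c => Quotient.lift c.1 (fun a b hab =>
        (le_sigmaC_iff p c.1).mp c.2 a b hab)
      invFun := fun f => ⟨fun i => f (Quotient.mk p.val i),
        (le_sigmaC_iff p _).mpr (fun i j hij => by rw [Quotient.sound hij])⟩
      left_inv := fun c => by ext i; rfl
      right_inv := fun f => by
        funext q
        induction q using Quotient.inductionOn with
        | h i => rfl }
  rw [Nat.card_congr e, Nat.card_fun, Nat.card_eq_fintype_card (α := Fin t), Fintype.card_fin]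
  rfl


/-- For a finite simple graph `G` on `[n]` with bond lattice `L_G`, the chromatic
polynomial satisfies `χ_G(t) = ∑_{p ∈ L_G} μ(0, p) t^{n - r(p)}`, where `μ` is the
Möbius function of `L_G` (characterized by `μ(0,0) = 1` and
`∑_{l ≤ q} μ(0,l) = 0` for `q > 0`) and `r(p) = n - |p|` with `|p|` the number of
blocks of `p`.  The chromatic polynomial is evaluated at `t ∈ ℕ` as the number of
proper colorings of `G` with `t` colors. -/
theorem chromatic_polynomial_eq_moebius_sum {n : ℕ} (G : SimpleGraph (Fin n))
    (μ : BondLattice G → ℤ)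
    (hμ_bot : ∀ p : BondLattice G, p.val = ⊥ → μ p = 1)
    (hμ_sum : ∀ q : BondLattice G, q.val ≠ ⊥ →
      ∑ l ∈ Finset.univ.filter (fun l : BondLattice G => l ≤ q), μ l = 0) :
    ∀ t : ℕ,
      (Nat.card {c : Fin n → Fin t // ∀ i j, G.Adj i j → c i ≠ c j} : ℤ) =
        ∑ p : BondLattice G, μ p * (t : ℤ) ^ (n - (n - numBlocks p)) := by
  intro t
  have hle : ∀ p : BondLattice G, numBlocks p ≤ n := by
    intro p
    have h := Nat.card_le_card_of_surjective (Quotient.mk p.val) Quotient.mk_surjective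
    simpa [numBlocks, Nat.card_eq_fintype_card] using h
  have hexp : ∀ p : BondLattice G, n - (n - numBlocks p) = numBlocks p := fun p =>
    Nat.sub_sub_self (hle p)
  have key : ∀ p : BondLattice G,
      μ p * (t : ℤ) ^ numBlocks p =
        ∑ c : Fin n → Fin t, if p ≤ sigmaC G c then μ p else 0 := by
    intro p
    have hcard : (Finset.univ.filter (fun c : Fin n → Fin t => p ≤ sigmaC G c)).card =
        t ^ numBlocks p := by
      rw [← Fintype.card_subtype, ← Nat.card_eq_fintype_card]
      exact card_le_sigmaC p
    rw [← Finset.sum_filter, Finset.sum_const, hcard, nsmul_eq_mul]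
    push_cast
    ring
  calc (Nat.card {c : Fin n → Fin t // ∀ i j, G.Adj i j → c i ≠ c j} : ℤ)
      = ∑ c : Fin n → Fin t, if (∀ i j, G.Adj i j → c i ≠ c j) then (1 : ℤ) else 0 := by
        rw [← Finset.sum_filter, Finset.sum_const, Nat.card_eq_fintype_card,
          Fintype.card_subtype]
        norm_num
    _ = ∑ c : Fin n → Fin t, ∑ p : BondLattice G, if p ≤ sigmaC G c then μ p else 0 := by
        refine Finset.sum_congr rfl fun c _ => ?_
        rw [← Finset.sum_filter]
        by_cases h : (sigmaC G c).val = ⊥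
        · have hfil : Finset.univ.filter (fun p : BondLattice G => p ≤ sigmaC G c) =
              {sigmaC G c} := by
            ext p
            simp only [Finset.mem_filter, Finset.mem_univ, true_and, Finset.mem_singleton]
            constructor
            · intro hp
              apply Subtype.ext
              have : p.val ≤ (⊥ : Setoid (Fin n)) := h ▸ hp
              rw [le_bot_iff.mp this, h]
            · rintro rfl; exact le_refl _
          rw [hfil, Finset.sum_singleton, hμ_bot _ h,
            if_pos ((sigmaC_bot_iff c).mp h)]
        · rw [hμ_sum _ h, if_neg (fun hc => h ((sigmaC_bot_iff c).mpr hc))]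
    _ = ∑ p : BondLattice G, ∑ c : Fin n → Fin t, if p ≤ sigmaC G c then μ p else 0 :=
        Finset.sum_comm
    _ = ∑ p : BondLattice G, μ p * (t : ℤ) ^ (n - (n - numBlocks p)) := by
        refine Finset.sum_congr rfl fun p _ => ?_
        rw [hexp p, key p]
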